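/- If H is a partial cube and E_f is a Θ-class of H, then the graph H/E_f obtained from H by contracting all edges of E_f is a partial cube (called a contraction of H), and H is an expansion of H/E_f. -/

import Mathlib

open SimpleGraph

/-- The hypercube graph `Q_d` on `{0,1}^d`: two vertices are adjacent iff they
differ in exactly one coordinate. -/
def hypercubeGraph (d : ℕ) : SimpleGraph (Fin d → Bool) where
  Adj x y := hammingDist x y = 1
  symm := by
    constructor
    intro x y h
    rwa [hammingDist_comm]
  loopless := by
    constructor
    intro x h
    simp [hammingDist_self] at h

/-- A partial cube: a connected simple graph admitting an isometric embedding
into some hypercube. -/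
def IsPartialCube {V : Type} (G : SimpleGraph V) : Prop :=
  G.Connected ∧
    ∃ (d : ℕ) (φ : V → (Fin d → Bool)), Function.Injective φ ∧
      ∀ v w : V, (hypercubeGraph d).dist (φ v) (φ w) = G.dist v w

/-- A subgraph is isometric if distances within it coincide with distances in
the ambient graph. -/
def IsIsometricSubgraph {V : Type} {G : SimpleGraph V} (G' : G.Subgraph) : Prop :=
  ∀ u v : G'.verts, G'.coe.dist u v = G.dist u.val v.val

/-- The expansion graph of `G` with respect to two subgraphs `G₁, G₂`: take
disjoint copies of `G₁` and `G₂` and join the two copies of each vertex of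
`G₁ ∩ G₂` by a matching edge. -/
def expansionGraph {V : Type} {G : SimpleGraph V} (G₁ G₂ : G.Subgraph) :
    SimpleGraph (↥G₁.verts ⊕ ↥G₂.verts) where
  Adj a b :=
    match a, b with
    | Sum.inl u, Sum.inl v => G₁.Adj u v
    | Sum.inr u, Sum.inr v => G₂.Adj u v
    | Sum.inl u, Sum.inr v => (u : V) = (v : V)
    | Sum.inr u, Sum.inl v => (u : V) = (v : V)
  symm := by
    constructor
    rintro (u | u) (v | v) h
    · exact G₁.adj_symm h
    · exact h.symm
    · exact h.symm
    · exact G₂.adj_symm h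
  loopless := by
    constructor
    rintro (u | u) h
    · exact G.irrefl (G₁.adj_sub h)
    · exact G.irrefl (G₂.adj_sub h)

/-- `H` is the expansion of `G` with respect to the subgraphs `G₁` and `G₂`:
they are isometric, cover `G` (vertices and edges), have non-empty
intersection, and `H` is isomorphic to the resulting expansion graph. -/
structure IsExpansionWrt {V W : Type} (H : SimpleGraph W) (G : SimpleGraph V)
    (G₁ G₂ : G.Subgraph) : Prop where
  isometric₁ : IsIsometricSubgraph G₁
  isometric₂ : IsIsometricSubgraph G₂
  covers : G₁ ⊔ G₂ = ⊤
  inter_nonempty : (G₁.verts ∩ G₂.verts).Nonempty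
  iso : Nonempty (H ≃g expansionGraph G₁ G₂)

/-- `H` is an expansion of `G` (with respect to some admissible pair of
subgraphs). -/
def IsExpansionOf {V W : Type} (H : SimpleGraph W) (G : SimpleGraph V) : Prop :=
  ∃ G₁ G₂ : G.Subgraph, IsExpansionWrt H G G₁ G₂

/-- The Djoković–Winkler relation `Θ` on (unordered) edges: `e = xy` and
`f = uv` are related iff `d(x,u) + d(y,v) ≠ d(x,v) + d(y,u)`. -/
def DWRel {V : Type} (G : SimpleGraph V) (e f : Sym2 V) : Prop :=
  ∃ x y u v : V, e = s(x, y) ∧ f = s(u, v) ∧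
    G.dist x u + G.dist y v ≠ G.dist x v + G.dist y u

/-- A `Θ`-class of `G`: the set of all edges of `G` related to some fixed edge
`e` of `G` by the Djoković–Winkler relation. -/
def IsThetaClass {V : Type} (G : SimpleGraph V) (C : Set (Sym2 V)) : Prop :=
  ∃ e ∈ G.edgeSet, C = {f | f ∈ G.edgeSet ∧ DWRel G e f}

/-- The graph obtained from `H` by contracting (identifying the two endpoints
of) every edge in `C`. -/
def contractEdges {V : Type} (H : SimpleGraph V) (C : Set (Sym2 V)) :
    SimpleGraph (Quot fun v w : V => s(v, w) ∈ C) :=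
  SimpleGraph.fromRel fun a b =>
    ∃ v w : V, a = Quot.mk _ v ∧ b = Quot.mk _ w ∧ H.Adj v w

namespace PCAux

open Finset

variable {d : ℕ}

/-- `x` and `y` differ exactly at coordinate `i`. -/
def FlipAt (i : Fin d) (x y : Fin d → Bool) : Prop :=
  x i ≠ y i ∧ ∀ k, k ≠ i → x k = y k

lemma FlipAt.symm {i : Fin d} {x y : Fin d → Bool} (h : FlipAt i x y) : FlipAt i y x :=
  ⟨h.1.symm, fun k hk => (h.2 k hk).symm⟩

lemma bool_trans {a b c : Bool} (h1 : a ≠ b) (h2 : b ≠ c) : a = c := by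
  revert h1 h2; revert a b c; decide

lemma hammingDist_filter (x y : Fin d → Bool) :
    hammingDist x y = #{i | x i ≠ y i} := rfl

lemma flipAt_iff_hammingDist_one {x y : Fin d → Bool} :
    (∃ i, FlipAt i x y) ↔ hammingDist x y = 1 := by
  constructor
  · rintro ⟨i, hi, hk⟩
    rw [hammingDist_filter]
    have : ({i' | x i' ≠ y i'} : Finset (Fin d)) = {i} := by
      ext k
      simp only [mem_filter, mem_univ, true_and, mem_singleton]
      constructor
      · intro hne; by_contra hk'; exact hne (hk k hk')
      · rintro rfl; exact hi
    rw [this, card_singleton]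
  · intro h
    rw [hammingDist_filter, Finset.card_eq_one] at h
    obtain ⟨i, hi⟩ := h
    refine ⟨i, ?_, ?_⟩
    · have : i ∈ ({i' | x i' ≠ y i'} : Finset (Fin d)) := by rw [hi]; exact mem_singleton_self i
      simpa using this
    · intro k hk
      by_contra hne
      have : k ∈ ({i' | x i' ≠ y i'} : Finset (Fin d)) := by simpa using hne
      rw [hi, mem_singleton] at this
      exact hk this

lemma hamming_update {x y : Fin d → Bool} {j : Fin d} (h : x j ≠ y j) :
    hammingDist (Function.update x j (y j)) y + 1 = hammingDist x y := by
  rw [hammingDist_filter, hammingDist_filter]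
  have hset : ({i | Function.update x j (y j) i ≠ y i} : Finset (Fin d))
      = ({i | x i ≠ y i} : Finset (Fin d)).erase j := by
    ext k
    by_cases hk : k = j
    · subst hk; simp [Function.update_self]
    · simp [Function.update_of_ne hk, hk]
  rw [hset]
  exact Finset.card_erase_add_one (by simpa using h)

lemma flipAt_update {x y : Fin d → Bool} {j : Fin d} (h : x j ≠ y j) :
    FlipAt j x (Function.update x j (y j)) := by
  refine ⟨?_, ?_⟩
  · rw [Function.update_self]; exact h
  · intro k hk; rw [Function.update_of_ne hk]

lemma hammingDist_as_sum (x y : Fin d → Bool) :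
    hammingDist x y = ∑ i, (if x i = y i then 0 else 1) := by
  rw [hammingDist_filter, Finset.card_filter]
  exact Finset.sum_congr rfl fun i _ => by by_cases h : x i = y i <;> simp [h]

lemma bool_balance (a b c e : Bool) (h : a = b ∨ c = e) :
    ((if a = c then 0 else 1) + (if b = e then 0 else 1) : ℕ)
      = (if a = e then 0 else 1) + (if b = c then 0 else 1) := by
  revert h; revert a b c e; decide

lemma dw_balanced {i j : Fin d} {x y u v : Fin d → Bool} (hxy : FlipAt i x y)
    (huv : FlipAt j u v) (hij : i ≠ j) :
    hammingDist x u + hammingDist y v = hammingDist x v + hammingDist y u := by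
  simp only [hammingDist_as_sum, ← Finset.sum_add_distrib]
  refine Finset.sum_congr rfl fun k _ => ?_
  by_cases hk : k = i
  · subst hk
    exact bool_balance _ _ _ _ (Or.inr (huv.2 k (by simpa using hij)))
  · exact bool_balance _ _ _ _ (Or.inl (hxy.2 k hk))

lemma dw_unbalanced {i : Fin d} {x y u v : Fin d → Bool} (hxy : FlipAt i x y)
    (huv : FlipAt i u v) :
    hammingDist x u + hammingDist y v ≠ hammingDist x v + hammingDist y u := by
  simp only [hammingDist_as_sum, ← Finset.sum_add_distrib]
  rw [← Finset.add_sum_erase _ _ (Finset.mem_univ i),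
      ← Finset.add_sum_erase _ _ (Finset.mem_univ i)]
  have hrest : ∑ k ∈ Finset.univ.erase i, ((if x k = u k then 0 else 1) + (if y k = v k then 0 else 1) : ℕ)
      = ∑ k ∈ Finset.univ.erase i, ((if x k = v k then 0 else 1) + (if y k = u k then 0 else 1) : ℕ) := by
    refine Finset.sum_congr rfl fun k hk => ?_
    have hk' : k ≠ i := (Finset.mem_erase.mp hk).1
    exact bool_balance _ _ _ _ (Or.inl (hxy.2 k hk'))
  rw [hrest]
  intro hEq
  have hterm : ((if x i = u i then 0 else 1) + (if y i = v i then 0 else 1) : ℕ)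
      = (if x i = v i then 0 else 1) + (if y i = u i then 0 else 1) :=
    Nat.add_right_cancel hEq
  revert hterm
  have h1 := hxy.1
  have h2 := huv.1
  revert h1 h2
  generalize x i = a; generalize y i = b; generalize u i = c; generalize v i = e
  revert a b c e; decide

/-- Walks are at least as long as the Hamming distance of an edge-Lipschitz map. -/
lemma hamming_le_walk_length {V : Type} {G : SimpleGraph V} (f : V → (Fin d → Bool))
    (hf : ∀ {a b : V}, G.Adj a b → hammingDist (f a) (f b) ≤ 1) :
    ∀ {a b : V} (w : G.Walk a b), hammingDist (f a) (f b) ≤ w.length := by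
  intro a b w
  induction w with
  | nil => simp
  | @cons a c b h p ih =>
      calc hammingDist (f a) (f b) ≤ hammingDist (f a) (f c) + hammingDist (f c) (f b) :=
            hammingDist_triangle _ _ _
        _ ≤ 1 + p.length := Nat.add_le_add (hf h) ih
        _ = (SimpleGraph.Walk.cons h p).length := by simp [Nat.add_comm]

lemma exists_hypercube_walk : ∀ (n : ℕ) (x y : Fin d → Bool), hammingDist x y = n →
    ∃ w : (hypercubeGraph d).Walk x y, w.length = n := by
  intro n
  induction n with
  | zero =>
      intro x y h; rw [hammingDist_eq_zero] at h; subst h; exact ⟨.nil, rfl⟩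
  | succ n ih =>
      intro x y h
      have hne : x ≠ y := by intro hxy; subst hxy; simp [hammingDist_self] at h
      have : ∃ j, x j ≠ y j := by
        by_contra hc
        push_neg at hc
        exact hne (funext hc)
      obtain ⟨j, hj⟩ := this
      have hupd := hamming_update (x := x) (y := y) (j := j) hj
      rw [h] at hupd
      obtain ⟨w, hw⟩ := ih (Function.update x j (y j)) y (Nat.succ_injective hupd)
      have hadj : (hypercubeGraph d).Adj x (Function.update x j (y j)) :=
        flipAt_iff_hammingDist_one.mp ⟨j, flipAt_update hj⟩
      exact ⟨.cons hadj w, by simp [hw]⟩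

lemma hypercube_dist_eq (x y : Fin d → Bool) :
    (hypercubeGraph d).dist x y = hammingDist x y := by
  obtain ⟨w, hw⟩ := exists_hypercube_walk (hammingDist x y) x y rfl
  refine le_antisymm (hw ▸ SimpleGraph.dist_le w) ?_
  obtain ⟨p, hp⟩ := SimpleGraph.Reachable.exists_walk_length_eq_dist ⟨w⟩
  rw [← hp]
  exact hamming_le_walk_length (fun z => z) (fun h => le_of_eq h) p

end PCAux

lemma expansionGraph_inl_inl {V : Type} {G : SimpleGraph V} (G₁ G₂ : G.Subgraph)
    (u v : ↥G₁.verts) :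
    (expansionGraph G₁ G₂).Adj (Sum.inl u) (Sum.inl v) ↔ G₁.Adj u v := Iff.rfl

lemma expansionGraph_inr_inr {V : Type} {G : SimpleGraph V} (G₁ G₂ : G.Subgraph)
    (u v : ↥G₂.verts) :
    (expansionGraph G₁ G₂).Adj (Sum.inr u) (Sum.inr v) ↔ G₂.Adj u v := Iff.rfl

lemma expansionGraph_inl_inr {V : Type} {G : SimpleGraph V} (G₁ G₂ : G.Subgraph)
    (u : ↥G₁.verts) (v : ↥G₂.verts) :
    (expansionGraph G₁ G₂).Adj (Sum.inl u) (Sum.inr v) ↔ (u : V) = (v : V) := Iff.rfl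

lemma expansionGraph_inr_inl {V : Type} {G : SimpleGraph V} (G₁ G₂ : G.Subgraph)
    (u : ↥G₂.verts) (v : ↥G₁.verts) :
    (expansionGraph G₁ G₂).Adj (Sum.inr u) (Sum.inl v) ↔ (u : V) = (v : V) := Iff.rfl

/-- If `H` is a partial cube and `E_f` is a `Θ`-class of `H`, then the graph
`H/E_f` obtained by contracting all edges of `E_f` is a partial cube, and `H`
is an expansion of `H/E_f`. -/
theorem contraction_isPartialCube_and_expansion {V : Type} (H : SimpleGraph V)
    (hH : IsPartialCube H) (C : Set (Sym2 V)) (hC : IsThetaClass H C) :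
    IsPartialCube (contractEdges H C) ∧ IsExpansionOf H (contractEdges H C) := by
  classical
  obtain ⟨hconn, d, φ, hinj, hdist⟩ := hH
  have hdist' : ∀ v w : V, hammingDist (φ v) (φ w) = H.dist v w := fun v w => by
    rw [← hdist v w, PCAux.hypercube_dist_eq]
  obtain ⟨e, he, hCdef⟩ := hC
  revert he hCdef
  induction e using Sym2.ind with
  | _ x y =>
  intro he hCdef
  have hadj_xy : H.Adj x y := he
  -- basic facts about images of adjacent vertices
  have hflipAdj : ∀ {u v : V}, H.Adj u v → ∃ j, PCAux.FlipAt j (φ u) (φ v) := by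
    intro u v h
    exact PCAux.flipAt_iff_hammingDist_one.mpr
      (by rw [hdist']; exact SimpleGraph.dist_eq_one_iff_adj.mpr h)
  obtain ⟨i₀, hflip₀⟩ := hflipAdj hadj_xy
  -- membership in the Θ-class is: the edge flips coordinate i₀
  have hC_mem : ∀ {u v : V}, H.Adj u v → (s(u, v) ∈ C ↔ φ u i₀ ≠ φ v i₀) := by
    intro u v huv
    obtain ⟨j, hj⟩ := hflipAdj huv
    rw [hCdef]
    constructor
    · rintro ⟨-, hdw⟩
      obtain ⟨x', y', u', v', hexy, heuv, hne⟩ := hdw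
      by_contra hsame
      have hji : j ≠ i₀ := by
        intro hh; subst hh; exact hj.1 hsame
      apply hne
      rw [← hdist', ← hdist', ← hdist', ← hdist']
      have hf1 : PCAux.FlipAt i₀ (φ x') (φ y') := by
        rcases Sym2.eq_iff.mp hexy with ⟨h1, h2⟩ | ⟨h1, h2⟩
        · rw [← h1, ← h2]; exact hflip₀
        · rw [← h1, ← h2]; exact hflip₀.symm
      have hf2 : PCAux.FlipAt j (φ u') (φ v') := by
        rcases Sym2.eq_iff.mp heuv with ⟨h1, h2⟩ | ⟨h1, h2⟩
        · rw [← h1, ← h2]; exact hj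
        · rw [← h1, ← h2]; exact hj.symm
      exact PCAux.dw_balanced hf1 hf2 (Ne.symm hji)
    · intro hne
      have hji : j = i₀ := by
        by_contra hh
        exact hne (hj.2 i₀ (fun h' => hh h'.symm))
      subst hji
      refine ⟨huv, x, y, u, v, rfl, rfl, ?_⟩
      rw [← hdist', ← hdist', ← hdist', ← hdist']
      exact PCAux.dw_unbalanced hflip₀ hj
  -- the projection forgetting coordinate i₀
  set p : V → (Fin d → Bool) := fun v => Function.update (φ v) i₀ false with hpdef
  have hp_i₀ : ∀ v, p v i₀ = false := fun v => Function.update_self _ _ _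
  have hp_apply : ∀ v k, k ≠ i₀ → p v k = φ v k := fun v k hk => Function.update_of_ne hk _ _
  have hp_of_flip : ∀ {a b : V}, PCAux.FlipAt i₀ (φ a) (φ b) → p a = p b := by
    intro a b hf
    funext k
    by_cases hk : k = i₀
    · subst hk; rw [hp_i₀, hp_i₀]
    · rw [hp_apply a k hk, hp_apply b k hk]; exact hf.2 k hk
  have hp_eq_of_C : ∀ a b : V, s(a, b) ∈ C → p a = p b := by
    intro a b h
    have hadj : H.Adj a b := by
      rw [hCdef] at h; exact H.mem_edgeSet.mp h.1
    have hne : φ a i₀ ≠ φ b i₀ := (hC_mem hadj).mp h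
    obtain ⟨j, hj⟩ := hflipAdj hadj
    have hji : j = i₀ := by
      by_contra hh
      exact hne (hj.2 i₀ (fun h' => hh h'.symm))
    subst hji
    exact hp_of_flip hj
  have hφ_ext : ∀ {a b : V}, p a = p b → φ a i₀ = φ b i₀ → a = b := by
    intro a b h1 h2
    apply hinj
    funext k
    by_cases hk : k = i₀
    · subst hk; exact h2
    · rw [← hp_apply a k hk, ← hp_apply b k hk, h1]
  have hadj_of_p : ∀ {a b : V}, p a = p b → φ a i₀ ≠ φ b i₀ → H.Adj a b := by
    intro a b h1 h2
    rw [← SimpleGraph.dist_eq_one_iff_adj, ← hdist']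
    apply PCAux.flipAt_iff_hammingDist_one.mp
    refine ⟨i₀, h2, fun k hk => ?_⟩
    rw [← hp_apply a k hk, ← hp_apply b k hk, h1]
  have hr_of : ∀ {a b : V}, a ≠ b → p a = p b → s(a, b) ∈ C := by
    intro a b hab h1
    by_cases h2 : φ a i₀ = φ b i₀
    · exact absurd (hφ_ext h1 h2) hab
    · exact (hC_mem (hadj_of_p h1 h2)).mpr h2
  -- the quotient map
  let ψ : (Quot fun v w : V => s(v, w) ∈ C) → (Fin d → Bool) :=
    Quot.lift p (fun a b h => hp_eq_of_C a b h)
  have hmk_iff : ∀ a b : V,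
      (Quot.mk _ a : Quot fun v w : V => s(v, w) ∈ C) = Quot.mk _ b ↔ p a = p b := by
    intro a b
    constructor
    · intro h
      have := congrArg ψ h
      simpa [ψ] using this
    · intro h
      by_cases hab : a = b
      · rw [hab]
      · exact Quot.sound (hr_of hab h)
  have hψ_inj : Function.Injective ψ := by
    intro a b
    obtain ⟨v, rfl⟩ := Quot.exists_rep a
    obtain ⟨w, rfl⟩ := Quot.exists_rep b
    intro h
    exact (hmk_iff v w).mpr h
  -- adjacency in the contraction
  have hGadj : ∀ {a b : Quot fun v w : V => s(v, w) ∈ C},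
      (contractEdges H C).Adj a b ↔
        (a ≠ b ∧ ∃ v w : V, a = Quot.mk _ v ∧ b = Quot.mk _ w ∧ H.Adj v w) := by
    intro a b
    simp only [contractEdges, SimpleGraph.fromRel_adj]
    constructor
    · rintro ⟨hne, (⟨v, w, hv, hw, hvw⟩ | ⟨v, w, hv, hw, hvw⟩)⟩
      · exact ⟨hne, v, w, hv, hw, hvw⟩
      · exact ⟨hne, w, v, hw, hv, hvw.symm⟩
    · rintro ⟨hne, v, w, hv, hw, hvw⟩
      exact ⟨hne, Or.inl ⟨v, w, hv, hw, hvw⟩⟩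
  have hadj_flip : ∀ {v w : V}, H.Adj v w →
      (Quot.mk _ v : Quot fun v w : V => s(v, w) ∈ C) ≠ Quot.mk _ w →
      ∃ j, j ≠ i₀ ∧ PCAux.FlipAt j (p v) (p w) := by
    intro v w hvw hne
    obtain ⟨j, hj⟩ := hflipAdj hvw
    have hji : j ≠ i₀ := by
      intro hh; subst hh
      exact hne ((hmk_iff v w).mpr (hp_of_flip hj))
    refine ⟨j, hji, ?_, ?_⟩
    · rw [hp_apply v j hji, hp_apply w j hji]; exact hj.1
    · intro k hk
      by_cases hki : k = i₀
      · subst hki; rw [hp_i₀, hp_i₀]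
      · rw [hp_apply v k hki, hp_apply w k hki]; exact hj.2 k hk
  have h_adj_ham1 : ∀ {a b : Quot fun v w : V => s(v, w) ∈ C},
      (contractEdges H C).Adj a b → hammingDist (ψ a) (ψ b) = 1 := by
    intro a b hab
    obtain ⟨hne, v, w, rfl, rfl, hvw⟩ := hGadj.mp hab
    obtain ⟨j, _, hfj⟩ := hadj_flip hvw hne
    exact PCAux.flipAt_iff_hammingDist_one.mp ⟨j, hfj⟩
  -- the key one-step lemma along geodesics
  have hstep : ∀ (n : ℕ) (v w : V), H.dist v w = n + 1 →
      ∃ (v' : V) (j : Fin d), H.Adj v v' ∧ H.dist v' w = n ∧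
        PCAux.FlipAt j (φ v) (φ v') ∧ φ v j ≠ φ w j ∧ φ v' j = φ w j ∧
        (j ≠ i₀ → hammingDist (p v') (p w) + 1 = hammingDist (p v) (p w) ∧
          PCAux.FlipAt j (p v) (p v')) ∧
        (j = i₀ → p v = p v') := by
    intro n v w h
    obtain ⟨W, hW⟩ := hconn.exists_walk_length_eq_dist v w
    rw [h] at hW
    cases W with
    | nil => simp at hW
    | cons hA W' =>
      rename_i v'
      have hW' : W'.length = n := by simpa using hW
      have hdvv' : H.dist v v' = 1 := SimpleGraph.dist_eq_one_iff_adj.mpr hA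
      have h1 : H.dist v w ≤ H.dist v v' + H.dist v' w := hconn.dist_triangle
      have h2 : H.dist v' w ≤ n := hW' ▸ SimpleGraph.dist_le W'
      have hB : H.dist v' w = n := by omega
      have hamvw : hammingDist (φ v) (φ w) = n + 1 := by rw [hdist']; exact h
      have hamv'w : hammingDist (φ v') (φ w) = n := by rw [hdist']; exact hB
      obtain ⟨j, hj⟩ := hflipAdj hA
      have hE : φ v' j = φ w j := by
        by_contra hE
        have hupd : Function.update (φ v') j (φ w j) = φ v := by
          funext k
          by_cases hk : k = j
          · subst hk
            rw [Function.update_self]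
            exact (PCAux.bool_trans hj.1 hE).symm
          · rw [Function.update_of_ne hk]
            exact (hj.2 k hk).symm
        have := PCAux.hamming_update (x := φ v') (y := φ w) (j := j) hE
        rw [hupd, hamvw, hamv'w] at this
        omega
      have hD : φ v j ≠ φ w j := by rw [← hE]; exact hj.1
      refine ⟨v', j, hA, hB, hj, hD, hE, ?_, ?_⟩
      · intro hji
        have hpf : PCAux.FlipAt j (p v) (p v') := by
          refine ⟨?_, ?_⟩
          · rw [hp_apply v j hji, hp_apply v' j hji]; exact hj.1
          · intro k hk
            by_cases hki : k = i₀
            · subst hki; rw [hp_i₀, hp_i₀]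
            · rw [hp_apply v k hki, hp_apply v' k hki]; exact hj.2 k hk
        have hpj : p v j ≠ p w j := by
          rw [hp_apply v j hji, hp_apply w j hji]; exact hD
        have hupd : Function.update (p v) j (p w j) = p v' := by
          funext k
          by_cases hk : k = j
          · subst hk
            rw [Function.update_self, hp_apply w k hji, hp_apply v' k hji, hE]
          · rw [Function.update_of_ne hk]
            by_cases hki : k = i₀
            · subst hki; rw [hp_i₀, hp_i₀]
            · rw [hp_apply v k hki, hp_apply v' k hki]; exact hj.2 k hk
        have := PCAux.hamming_update (x := p v) (y := p w) (j := j) hpj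
        rw [hupd] at this
        exact ⟨this, hpf⟩
      · intro hji
        subst hji
        exact hp_of_flip hj
  -- upper bound: walks in the contraction realizing the hamming distance
  have h_ub : ∀ (n : ℕ) (v w : V), H.dist v w = n →
      ∃ W : (contractEdges H C).Walk (Quot.mk _ v) (Quot.mk _ w),
        W.length ≤ hammingDist (p v) (p w) := by
    intro n
    induction n with
    | zero =>
      intro v w h
      have hvw : v = w := (hconn.dist_eq_zero_iff).mp h
      subst hvw
      exact ⟨.nil, by simp⟩
    | succ n ih =>
      intro v w h
      obtain ⟨v', j, hA, hB, hj, hD, hE, hF, hG⟩ := hstep n v w h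
      by_cases hji : j = i₀
      · have hpp : p v = p v' := hG hji
        have hq : (Quot.mk _ v : Quot fun v w : V => s(v, w) ∈ C) = Quot.mk _ v' :=
          (hmk_iff v v').mpr hpp
        obtain ⟨W, hWl⟩ := ih v' w hB
        rw [hq, hpp]
        exact ⟨W, hWl⟩
      · obtain ⟨hham, hpf⟩ := hF hji
        have hne : (Quot.mk _ v : Quot fun v w : V => s(v, w) ∈ C) ≠ Quot.mk _ v' := by
          intro hq
          exact hpf.1 (congrFun ((hmk_iff v v').mp hq) j)
        have hadj : (contractEdges H C).Adj (Quot.mk _ v) (Quot.mk _ v') :=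
          hGadj.mpr ⟨hne, v, v', rfl, rfl, hA⟩
        obtain ⟨W, hWl⟩ := ih v' w hB
        refine ⟨.cons hadj W, ?_⟩
        rw [SimpleGraph.Walk.length_cons, ← hham]
        omega
  have hQdist : ∀ v w : V,
      (contractEdges H C).dist (Quot.mk _ v) (Quot.mk _ w) = hammingDist (p v) (p w) := by
    intro v w
    obtain ⟨W, hW⟩ := h_ub (H.dist v w) v w rfl
    refine le_antisymm (le_trans (SimpleGraph.dist_le W) hW) ?_
    obtain ⟨P, hP⟩ := SimpleGraph.Reachable.exists_walk_length_eq_dist ⟨W⟩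
    rw [← hP]
    exact PCAux.hamming_le_walk_length ψ (fun h => le_of_eq (h_adj_ham1 h)) P
  have hQconn : (contractEdges H C).Connected := by
    rw [SimpleGraph.connected_iff]
    refine ⟨?_, ?_⟩
    · intro a b
      obtain ⟨v, rfl⟩ := Quot.exists_rep a
      obtain ⟨w, rfl⟩ := Quot.exists_rep b
      obtain ⟨W, _⟩ := h_ub (H.dist v w) v w rfl
      exact ⟨W⟩
    · obtain ⟨v⟩ := hconn.nonempty
      exact ⟨Quot.mk _ v⟩
  have hPC : IsPartialCube (contractEdges H C) := by
    refine ⟨hQconn, d, ψ, hψ_inj, ?_⟩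
    intro a b
    obtain ⟨v, rfl⟩ := Quot.exists_rep a
    obtain ⟨w, rfl⟩ := Quot.exists_rep b
    rw [PCAux.hypercube_dist_eq, hQdist]
  refine ⟨hPC, ?_⟩
  have hbtrue : ∀ b : Bool, b ≠ false → b = true := by decide
  -- the two sides of the cut
  let Gside : Bool → (contractEdges H C).Subgraph := fun s =>
    { verts := {a | ∃ v : V, φ v i₀ = s ∧ Quot.mk _ v = a}
      Adj := fun a b => ∃ v w : V, φ v i₀ = s ∧ φ w i₀ = s ∧ H.Adj v w ∧
        Quot.mk _ v = a ∧ Quot.mk _ w = b ∧ a ≠ b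
      adj_sub := by
        rintro a b ⟨v, w, _, _, hvw, hv, hw, hne⟩
        exact hGadj.mpr ⟨hne, v, w, hv.symm, hw.symm, hvw⟩
      edge_vert := by
        rintro a b ⟨v, w, hv, _, _, hva, _, _⟩
        exact ⟨v, hv, hva⟩
      symm := by
        constructor
        rintro a b ⟨v, w, h1, h2, h3, h4, h5, h6⟩
        exact ⟨w, v, h2, h1, h3.symm, h5, h4, h6.symm⟩ }
  have hGside_adj : ∀ (s : Bool) (a b : Quot fun v w : V => s(v, w) ∈ C),
      (Gside s).Adj a b ↔ ∃ v w : V, φ v i₀ = s ∧ φ w i₀ = s ∧ H.Adj v w ∧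
        Quot.mk _ v = a ∧ Quot.mk _ w = b ∧ a ≠ b := fun _ _ _ => Iff.rfl
  have hsame_side : ∀ {a b : V},
      (Quot.mk _ a : Quot fun v w : V => s(v, w) ∈ C) = Quot.mk _ b →
      φ a i₀ = φ b i₀ → a = b := fun h1 h2 => hφ_ext ((hmk_iff _ _).mp h1) h2
  -- walks within one side realizing the hamming distance
  have h_ub_side : ∀ (s : Bool) (n : ℕ) (v w : V), H.dist v w = n →
      ∀ (hv : φ v i₀ = s) (hw : φ w i₀ = s),
      ∃ W : (Gside s).coe.Walk ⟨Quot.mk _ v, ⟨v, hv, rfl⟩⟩ ⟨Quot.mk _ w, ⟨w, hw, rfl⟩⟩,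
        W.length ≤ hammingDist (p v) (p w) := by
    intro s n
    induction n with
    | zero =>
      intro v w h hv hw
      have hvw : v = w := hconn.dist_eq_zero_iff.mp h
      subst hvw
      exact ⟨.nil, by simp⟩
    | succ n ih =>
      intro v w h hv hw
      obtain ⟨v', j, hA, hB, hj, hD, hE, hF, hG⟩ := hstep n v w h
      have hji : j ≠ i₀ := by
        intro hh; subst hh
        exact hD (hv.trans hw.symm)
      have hv' : φ v' i₀ = s := by
        rw [← hj.2 i₀ (fun hh => hji hh.symm)]; exact hv
      obtain ⟨hham, hpf⟩ := hF hji
      have hne : (Quot.mk _ v : Quot fun v w : V => s(v, w) ∈ C) ≠ Quot.mk _ v' := by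
        intro hq
        exact hpf.1 (congrFun ((hmk_iff v v').mp hq) j)
      have hadj : (Gside s).coe.Adj ⟨Quot.mk _ v, ⟨v, hv, rfl⟩⟩ ⟨Quot.mk _ v', ⟨v', hv', rfl⟩⟩ := by
        rw [SimpleGraph.Subgraph.coe_adj, hGside_adj]
        exact ⟨v, v', hv, hv', hA, rfl, rfl, hne⟩
      obtain ⟨W, hWl⟩ := ih v' w hB hv' hw
      refine ⟨.cons hadj W, ?_⟩
      rw [SimpleGraph.Walk.length_cons, ← hham]
      omega
  have hIso : ∀ s : Bool, IsIsometricSubgraph (Gside s) := by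
    intro s u u'
    obtain ⟨a, ha⟩ := u
    obtain ⟨b, hb⟩ := u'
    obtain ⟨v, hv, rfl⟩ := ha
    obtain ⟨w, hw, rfl⟩ := hb
    refine le_antisymm ?_ ?_
    · obtain ⟨W, hWl⟩ := h_ub_side s (H.dist v w) v w rfl hv hw
      rw [hQdist]
      exact le_trans (SimpleGraph.dist_le W) hWl
    · obtain ⟨W, _⟩ := h_ub_side s (H.dist v w) v w rfl hv hw
      obtain ⟨P, hP⟩ := SimpleGraph.Reachable.exists_walk_length_eq_dist ⟨W⟩
      rw [hQdist, ← hP]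
      refine PCAux.hamming_le_walk_length (fun u => ψ u.val) ?_ P
      intro a b hab
      exact le_of_eq (h_adj_ham1 ((Gside s).adj_sub hab))
  have hcov : Gside false ⊔ Gside true = ⊤ := by
    apply SimpleGraph.Subgraph.ext
    · ext a
      simp only [SimpleGraph.Subgraph.verts_sup, Set.mem_union, SimpleGraph.Subgraph.verts_top,
        Set.mem_univ, iff_true]
      obtain ⟨v, rfl⟩ := Quot.exists_rep a
      cases hs : φ v i₀
      · exact Or.inl ⟨v, hs, rfl⟩
      · exact Or.inr ⟨v, hs, rfl⟩
    · ext a b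
      simp only [SimpleGraph.Subgraph.sup_adj, SimpleGraph.Subgraph.top_adj]
      constructor
      · rintro (h | h)
        · exact (Gside false).adj_sub h
        · exact (Gside true).adj_sub h
      · intro h
        obtain ⟨hne, v, w, rfl, rfl, hvw⟩ := hGadj.mp h
        obtain ⟨j, hj⟩ := hflipAdj hvw
        have hji : j ≠ i₀ := by
          intro hh; subst hh
          exact hne ((hmk_iff v w).mpr (hp_of_flip hj))
        have hs : φ w i₀ = φ v i₀ := (hj.2 i₀ (fun hh => hji hh.symm)).symm
        cases hv0 : φ v i₀
        · exact Or.inl ⟨v, w, hv0, by rw [hs, hv0], hvw, rfl, rfl, hne⟩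
        · exact Or.inr ⟨v, w, hv0, by rw [hs, hv0], hvw, rfl, rfl, hne⟩
  have hxyC : s(x, y) ∈ C := (hC_mem hadj_xy).mpr hflip₀.1
  have hmkxy : (Quot.mk _ x : Quot fun v w : V => s(v, w) ∈ C) = Quot.mk _ y :=
    Quot.sound hxyC
  have hinter : ((Gside false).verts ∩ (Gside true).verts).Nonempty := by
    by_cases hx0 : φ x i₀ = false
    · have hy0 : φ y i₀ = true := hbtrue _ (fun h0 => hflip₀.1 (hx0.trans h0.symm))
      exact ⟨Quot.mk _ x, ⟨x, hx0, rfl⟩, ⟨y, hy0, hmkxy.symm⟩⟩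
    · have hx0' : φ x i₀ = true := hbtrue _ hx0
      have hy0 : φ y i₀ = false := by
        cases hy : φ y i₀
        · rfl
        · exact absurd (hx0'.trans hy.symm) hflip₀.1
      exact ⟨Quot.mk _ x, ⟨y, hy0, hmkxy.symm⟩, ⟨x, hx0', rfl⟩⟩
  -- the isomorphism between H and the expansion graph
  set f : V → (↥(Gside false).verts ⊕ ↥(Gside true).verts) := fun v =>
    if h : φ v i₀ = false then Sum.inl ⟨Quot.mk _ v, ⟨v, h, rfl⟩⟩
    else Sum.inr ⟨Quot.mk _ v, ⟨v, hbtrue _ h, rfl⟩⟩ with hfdef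
  have hf_inj : Function.Injective f := by
    intro v w h
    simp only [hfdef] at h
    by_cases hv0 : φ v i₀ = false <;> by_cases hw0 : φ w i₀ = false
    · rw [dif_pos hv0, dif_pos hw0] at h
      simp only [Sum.inl.injEq, Subtype.mk.injEq] at h
      exact hsame_side h (hv0.trans hw0.symm)
    · rw [dif_pos hv0, dif_neg hw0] at h
      simp at h
    · rw [dif_neg hv0, dif_pos hw0] at h
      simp at h
    · rw [dif_neg hv0, dif_neg hw0] at h
      simp only [Sum.inr.injEq, Subtype.mk.injEq] at h
      exact hsame_side h ((hbtrue _ hv0).trans (hbtrue _ hw0).symm)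
  have hf_surj : Function.Surjective f := by
    rintro (⟨a, ha⟩ | ⟨a, ha⟩)
    · obtain ⟨v, hv0, rfl⟩ := ha
      refine ⟨v, ?_⟩
      simp only [hfdef]
      rw [dif_pos hv0]
    · obtain ⟨v, hv0, rfl⟩ := ha
      refine ⟨v, ?_⟩
      simp only [hfdef]
      rw [dif_neg (by simp [hv0])]
  have hmap : ∀ v w : V,
      (expansionGraph (Gside false) (Gside true)).Adj (f v) (f w) ↔ H.Adj v w := by
    intro v w
    constructor
    · intro h
      simp only [hfdef] at h
      by_cases hv0 : φ v i₀ = false <;> by_cases hw0 : φ w i₀ = false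
      · rw [dif_pos hv0, dif_pos hw0, expansionGraph_inl_inl, hGside_adj] at h
        obtain ⟨v', w', h1, h2, h3, h4, h5, h6⟩ := h
        rw [hsame_side h4 (h1.trans hv0.symm), hsame_side h5 (h2.trans hw0.symm)] at h3
        exact h3
      · rw [dif_pos hv0, dif_neg hw0, expansionGraph_inl_inr] at h
        exact hadj_of_p ((hmk_iff _ _).mp h)
          (fun h0 => hw0 (h0.symm.trans hv0))
      · rw [dif_neg hv0, dif_pos hw0, expansionGraph_inr_inl] at h
        exact (hadj_of_p ((hmk_iff _ _).mp h.symm)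
          (fun h0 => hv0 (h0.symm.trans hw0))).symm
      · rw [dif_neg hv0, dif_neg hw0, expansionGraph_inr_inr, hGside_adj] at h
        obtain ⟨v', w', h1, h2, h3, h4, h5, h6⟩ := h
        rw [hsame_side h4 (h1.trans (hbtrue _ hv0).symm),
          hsame_side h5 (h2.trans (hbtrue _ hw0).symm)] at h3
        exact h3
    · intro hvw
      obtain ⟨j, hj⟩ := hflipAdj hvw
      simp only [hfdef]
      by_cases hji : j = i₀
      · rw [hji] at hj
        have hmk : (Quot.mk _ v : Quot fun v w : V => s(v, w) ∈ C) = Quot.mk _ w :=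
          (hmk_iff _ _).mpr (hp_of_flip hj)
        by_cases hv0 : φ v i₀ = false
        · have hw0 : ¬ φ w i₀ = false := fun h0 => hj.1 (hv0.trans h0.symm)
          rw [dif_pos hv0, dif_neg hw0, expansionGraph_inl_inr]
          exact hmk
        · have hw0 : φ w i₀ = false := by
            cases hwb : φ w i₀
            · rfl
            · exact absurd ((hbtrue _ hv0).trans hwb.symm) hj.1
          rw [dif_neg hv0, dif_pos hw0, expansionGraph_inr_inl]
          exact hmk
      · have hs : φ w i₀ = φ v i₀ := (hj.2 i₀ (fun hh => hji hh.symm)).symm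
        have hne : (Quot.mk _ v : Quot fun v w : V => s(v, w) ∈ C) ≠ Quot.mk _ w := by
          intro hq
          have := congrFun ((hmk_iff v w).mp hq) j
          rw [hp_apply v j hji, hp_apply w j hji] at this
          exact hj.1 this
        by_cases hv0 : φ v i₀ = false
        · rw [dif_pos hv0, dif_pos (hs.trans hv0), expansionGraph_inl_inl, hGside_adj]
          exact ⟨v, w, hv0, hs.trans hv0, hvw, rfl, rfl, hne⟩
        · have hw0 : ¬ φ w i₀ = false := fun h0 => hv0 (hs ▸ h0)
          rw [dif_neg hv0, dif_neg hw0, expansionGraph_inr_inr, hGside_adj]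
          exact ⟨v, w, hbtrue _ hv0, hbtrue _ hw0, hvw, rfl, rfl, hne⟩
  exact ⟨Gside false, Gside true,
    ⟨hIso false, hIso true, hcov, hinter,
      ⟨⟨Equiv.ofBijective f ⟨hf_inj, hf_surj⟩, fun {a b} => hmap a b⟩⟩⟩⟩
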